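/- Pointwise TreeExplorer length bound: for every rooted plane tree T with n(T) = n ≥ 2 nodes and l(T) = l leaves, the TreeExplorer code TE(T) has length at most 2n − 2 bits, and its length is strictly less than 2n − 2 whenever 2l ≠ n. -/

import Mathlib

/-- A rooted plane tree: a root node together with a finite ordered list of
subtrees, the subtrees rooted at the children of the root. -/
inductive PTree : Type
  | node : List PTree → PTree

namespace PTree

/-- The subtrees rooted at the children of the root. -/
def children : PTree → List PTree
  | node ts => ts

mutual
/-- Number of nodes of a rooted plane tree. -/
def numNodes : PTree → ℕ
  | node ts => 1 + numNodesList ts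
def numNodesList : List PTree → ℕ
  | [] => 0
  | t :: ts => numNodes t + numNodesList ts
end

mutual
/-- Number of leaves (nodes with no children); a single-node tree has one leaf. -/
def numLeaves : PTree → ℕ
  | node [] => 1
  | node (t :: ts) => numLeaves t + numLeavesList ts
def numLeavesList : List PTree → ℕ
  | [] => 0
  | t :: ts => numLeaves t + numLeavesList ts
end

/-- Symbols of the ternary pit-climbing code: ↓, ↑, ⇑. -/
inductive PCSym : Type
  | down   -- ↓ : fall to the leftmost unexplored leaf
  | up     -- ↑ : climb to a never-before-visited node
  | upSeen -- ⇑ : climb to an already-visited node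
deriving DecidableEq

mutual
/-- Ternary pit-climbing code TPC: empty for a single node; `TPC t ++ [↑]` for a
single child subtree `t`; `TPC t₁ ++ [↑,↓] ++ TPC t₂ ++ [⇑,↓] ++ ⋯ ++ [⇑,↓] ++ TPC tₖ ++ [⇑]`
for children subtrees `t₁, …, tₖ`, `k ≥ 2`. -/
def TPC : PTree → List PCSym
  | node [] => []
  | node [t] => TPC t ++ [.up]
  | node (t₁ :: t₂ :: ts) => TPC t₁ ++ [.up, .down] ++ TPCRest (t₂ :: ts)
/-- TPC contribution of the second-onwards children subtrees. -/
def TPCRest : List PTree → List PCSym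
  | [] => []
  | [t] => TPC t ++ [.upSeen]
  | t :: ts => TPC t ++ [.upSeen, .down] ++ TPCRest ts
end

/-- Binary encoding of the pit-climbing symbols: ↓ ↦ 0, ⇑ ↦ 00, ↑ ↦ 1. -/
def pcBits : PCSym → List Bool
  | .down => [false]
  | .upSeen => [false, false]
  | .up => [true]

/-- Binary pit-climbing code PC. -/
def PC (T : PTree) : List Bool := (TPC T).flatMap pcBits

lemma numNodesList_append (a b : List PTree) :
    numNodesList (a ++ b) = numNodesList a + numNodesList b := by
  induction a with
  | nil => simp [numNodesList]
  | cons t ts ih => simp [numNodesList, ih]; ring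

lemma numNodesList_children_flatten (l : List PTree) :
    numNodesList ((l.map children).flatten) + l.length = numNodesList l := by
  induction l with
  | nil => simp [numNodesList]
  | cons t ts ih =>
      cases t with
      | node cs =>
        simp only [List.map_cons, List.flatten_cons, numNodesList_append,
          List.length_cons, numNodesList, children, numNodes]
        omega

/-- Breadth-first list of the sibling groups of a tree, starting from the list
`gs` of sibling groups at the current level: the groups of the current level
followed by the groups of children on the levels below, level by level and
left to right within each level. -/
def bfsGroups (gs : List (List PTree)) : List (List PTree) :=
  if h : gs.flatten.isEmpty then []
  else gs ++ bfsGroups (gs.flatten.map children)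
termination_by numNodesList gs.flatten
decreasing_by
  have h1 := numNodesList_children_flatten gs.flatten
  have h2 : gs.flatten.length ≠ 0 := by
    intro hh
    rw [List.length_eq_zero_iff] at hh
    exact h (List.isEmpty_iff.mpr hh)
  omega

/-- Symbols of the ternary tunnel-digging code: ←, →, ⇒. -/
inductive TDSym : Type
  | leaf   -- ← : a leaf node
  | inner  -- → : a node with at least one child
  | tunnel -- ⇒ : transition between consecutive non-sibling nodes
deriving DecidableEq

/-- The symbols written for one sibling group: ← for each leaf, → for each
node with at least one child. -/
def groupSyms (g : List PTree) : List TDSym :=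
  g.map (fun t => if t.children.isEmpty then .leaf else .inner)

/-- Ternary tunnel-digging code TTD: the non-root nodes in breadth-first order
(by increasing depth, left to right within each depth), ← for each leaf and →
for each internal node, with ⇒ inserted between every two consecutive
non-sibling nodes. -/
def TTD (T : PTree) : List TDSym :=
  List.intercalate [TDSym.tunnel]
    (((bfsGroups [T.children]).filter (fun g => ¬ g.isEmpty)).map groupSyms)

/-- Binary encoding of the tunnel-digging symbols: ⇒ ↦ 0, → ↦ 00, ← ↦ 1. -/
def tdBits : TDSym → List Bool
  | .tunnel => [false]
  | .inner => [false, false]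
  | .leaf => [true]

/-- Binary tunnel-digging code TD. -/
def TD (T : PTree) : List Bool := (TTD T).flatMap tdBits

/-- TreeExplorer code TE: `0·PC(T)` if `l(T) < n(T)/2`, and `1·TD(T)` otherwise. -/
def TE (T : PTree) : List Bool :=
  if 2 * numLeaves T < numNodes T then false :: PC T else true :: TD T

end PTree

namespace PTree

lemma numLeavesList_append (a b : List PTree) :
    numLeavesList (a ++ b) = numLeavesList a + numLeavesList b := by
  induction a with
  | nil => simp [numLeavesList]
  | cons t ts ih => simp [numLeavesList, ih]; ring

mutual
theorem numLeaves_le_numNodes (t : PTree) : numLeaves t ≤ numNodes t := by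
  cases t with
  | node ts =>
    cases ts with
    | nil => simp [numLeaves, numNodes, numNodesList]
    | cons a as =>
        have h1 := numLeaves_le_numNodes a
        have h2 := numLeavesList_le_numNodesList as
        simp only [numLeaves, numNodes, numNodesList]
        omega
theorem numLeavesList_le_numNodesList (ts : List PTree) :
    numLeavesList ts ≤ numNodesList ts := by
  cases ts with
  | nil => simp [numLeavesList, numNodesList]
  | cons a as =>
      have h1 := numLeaves_le_numNodes a
      have h2 := numLeavesList_le_numNodesList as
      simp only [numLeavesList, numNodesList]
      omega
end

mutual
theorem pc_len (t : PTree) : (PC t).length + 3 = numNodes t + 2 * numLeaves t := by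
  cases t with
  | node ts =>
    match ts with
    | [] => simp [PC, TPC, numNodes, numNodesList, numLeaves]
    | [t] =>
        have h := pc_len t
        simp only [PC, TPC, List.flatMap_append, List.length_append,
          numNodes, numNodesList, numLeaves, numLeavesList] at *
        simp only [List.flatMap_cons, List.flatMap_nil, pcBits] at *
        simp at *
        omega
    | t₁ :: t₂ :: ts =>
        have h1 := pc_len t₁
        have h2 := pcRest_len (t₂ :: ts) (by simp)
        simp only [PC, TPC, List.flatMap_append, List.length_append,
          numNodes, numNodesList, numLeaves, numLeavesList] at *
        simp only [List.flatMap_cons, List.flatMap_nil, pcBits] at *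
        simp at *
        omega
theorem pcRest_len (ts : List PTree) (h : ts ≠ []) :
    ((TPCRest ts).flatMap pcBits).length + 1
      = numNodesList ts + 2 * numLeavesList ts := by
  match ts with
  | [] => exact absurd rfl h
  | [t] =>
      have h1 := pc_len t
      simp only [PC, TPCRest, List.flatMap_append, List.length_append,
        numNodesList, numLeavesList] at *
      simp only [List.flatMap_cons, List.flatMap_nil, pcBits] at *
      simp at *
      omega
  | t :: t' :: ts' =>
      have h1 := pc_len t
      have h2 := pcRest_len (t' :: ts') (by simp)
      simp only [PC, TPCRest, List.flatMap_append, List.length_append,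
        numNodesList, numLeavesList] at *
      simp only [List.flatMap_cons, List.flatMap_nil, pcBits] at *
      simp at *
      omega
end

end PTree
namespace PTree

@[simp] lemma children_node (ts : List PTree) : children (node ts) = ts := rfl

lemma dn1 : (fun g : List PTree => decide ¬ (g.isEmpty = true)) = (fun g => !g.isEmpty) := by
  funext g; cases g <;> simp

lemma dn2 : (fun t : PTree => decide ¬ (t.children.isEmpty = true)) = (fun t => !t.children.isEmpty) := by
  funext t; cases t.children <;> simp

lemma intercalate_cons_cons' {α : Type*} (s x y : List α) (t : List (List α)) :
    List.intercalate s (x :: y :: t) = x ++ s ++ List.intercalate s (y :: t) := by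
  simp [List.intercalate, List.intersperse]

lemma filter_nonempty_of_flatten_nil (gs : List (List PTree))
    (h : gs.flatten = []) : gs.filter (fun g => !g.isEmpty) = [] := by
  rw [List.filter_eq_nil_iff]
  intro g hg
  have := (List.flatten_eq_nil_iff.mp h) g hg
  simp [this]

lemma filter_nonempty_ne_nil (gs : List (List PTree))
    (h : gs.flatten ≠ []) : gs.filter (fun g => !g.isEmpty) ≠ [] := by
  intro hf
  apply h
  rw [List.flatten_eq_nil_iff]
  intro g hg
  rw [List.filter_eq_nil_iff] at hf
  have := hf g hg
  simpa using this

lemma blen_group (g : List PTree) :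
    ((groupSyms g).flatMap tdBits).length
      = g.length + (g.filter (fun t => !t.children.isEmpty)).length := by
  induction g with
  | nil => simp [groupSyms]
  | cons t ts ih =>
      rcases t with ⟨_ | ⟨c, cs⟩⟩ <;>
        simp [groupSyms, List.filter_cons, tdBits] at ih ⊢ <;> omega

lemma leaves_level (F : List PTree) :
    numLeavesList F
      = (F.filter (fun t => t.children.isEmpty)).length
        + numLeavesList (F.map children).flatten := by
  induction F with
  | nil => simp [numLeavesList]
  | cons t ts ih =>
      cases t with
      | node cs =>
        cases cs with
        | nil =>
            simp only [numLeavesList, numLeaves, List.map_cons, List.flatten_cons,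
              children_node, List.filter_cons]
            simp [ih]
            omega
        | cons c cs' =>
            have hL : numLeaves (node (c :: cs')) = numLeavesList (c :: cs') := rfl
            have hfc : (node (c :: cs')).children.isEmpty = false := rfl
            rw [List.filter_cons, hfc]
            simp only [List.map_cons, children_node, List.flatten_cons,
              numLeavesList_append, if_neg (by simp : ¬ (false = true))]
            show numLeaves (node (c :: cs')) + numLeavesList ts = _
            rw [hL, ih]
            omega

lemma filter_children_count (F : List PTree) :
    ((F.map children).filter (fun g => !g.isEmpty)).length
      = (F.filter (fun t => !t.children.isEmpty)).length := by
  induction F with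
  | nil => simp
  | cons t ts ih =>
      by_cases h : t.children.isEmpty <;>
        simp [List.filter_cons, h, ih]

lemma filter_compl_count (F : List PTree) :
    (F.filter (fun t => t.children.isEmpty)).length
      + (F.filter (fun t => !t.children.isEmpty)).length = F.length := by
  induction F with
  | nil => simp
  | cons t ts ih =>
      by_cases h : t.children.isEmpty <;>
        simp [List.filter_cons, h] <;> omega

lemma level_bits (gs : List (List PTree)) (h : gs.flatten ≠ []) :
    ((List.intercalate [TDSym.tunnel]
        ((gs.filter (fun g => !g.isEmpty)).map groupSyms)).flatMap tdBits).length + 1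
      = gs.flatten.length
        + (gs.flatten.filter (fun t => !t.children.isEmpty)).length
        + (gs.filter (fun g => !g.isEmpty)).length := by
  induction gs with
  | nil => simp at h
  | cons g rest ih =>
      by_cases hg : g.isEmpty
      · have hg' : g = [] := List.isEmpty_iff.mp hg
        subst hg'
        simp only [List.flatten_cons, List.nil_append] at h ⊢
        simp only [List.filter_cons, hg]
        simpa using ih h
      · have hgb : (!g.isEmpty) = true := by simp [hg]
        rw [List.flatten_cons, List.filter_append, List.filter_cons, hgb]
        simp only [eq_self_iff_true, if_true, List.map_cons, List.length_append, List.length_cons]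
        by_cases hr : rest.flatten = []
        · have hrf : rest.filter (fun g => !g.isEmpty) = [] :=
            filter_nonempty_of_flatten_nil rest hr
          rw [hrf]
          have : (rest.flatten.filter (fun t => !t.children.isEmpty)) = [] := by
            rw [hr]; rfl
          rw [this, hr]
          simp only [List.intercalate, List.map_nil, List.intersperse_single,
            List.flatten_cons, List.flatten_nil, List.append_nil, List.length_nil]
          rw [blen_group]
          omega
        · have hne := filter_nonempty_ne_nil rest hr
          have ihr := ih hr
          obtain ⟨a, as, hEq⟩ := List.exists_cons_of_ne_nil hne
          rw [hEq] at ihr ⊢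
          simp only [List.map_cons] at ihr ⊢
          rw [intercalate_cons_cons']
          simp only [List.flatMap_append, List.length_append, List.length_cons] at ihr ⊢
          rw [blen_group]
          simp only [List.flatMap_cons, List.flatMap_nil, tdBits, List.length_append,
            List.length_cons, List.length_nil] at ihr ⊢
          omega

end PTree
namespace PTree

lemma intercalate_append_ne {α : Type*} (s : List α) (a b : List (List α))
    (ha : a ≠ []) (hb : b ≠ []) :
    List.intercalate s (a ++ b) = List.intercalate s a ++ s ++ List.intercalate s b := by
  induction a with
  | nil => exact absurd rfl ha
  | cons x xs ih =>
      cases xs with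
      | nil =>
          cases b with
          | nil => exact absurd rfl hb
          | cons y ys => simp [intercalate_cons_cons', List.intercalate]
      | cons x' xs' =>
          have h2 := ih (by simp)
          simp only [List.cons_append] at h2 ⊢
          rw [intercalate_cons_cons', intercalate_cons_cons', h2]
          simp

theorem td_main (gs : List (List PTree)) (h : gs.flatten ≠ []) :
    ((List.intercalate [TDSym.tunnel]
        (((bfsGroups gs).filter (fun g => !g.isEmpty)).map groupSyms)).flatMap tdBits).length
      + 2 * numLeavesList gs.flatten + 1
    = 3 * numNodesList gs.flatten + (gs.filter (fun g => !g.isEmpty)).length := by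
  have hni : ¬ gs.flatten.isEmpty = true := by simpa using h
  rw [bfsGroups, dif_neg hni]
  rw [List.filter_append]
  have hN := numNodesList_children_flatten gs.flatten
  have hLv := leaves_level gs.flatten
  have hCC := filter_compl_count gs.flatten
  have hlen : gs.flatten.length ≠ 0 := fun hh => h (List.length_eq_zero_iff.mp hh)
  by_cases hr : (gs.flatten.map children).flatten = []
  · have hb : bfsGroups (gs.flatten.map children) = [] := by
      rw [bfsGroups, dif_pos (by rw [hr]; rfl)]
    rw [hb]
    simp only [List.filter_nil, List.append_nil]
    have hiR : gs.flatten.filter (fun t => !t.children.isEmpty) = [] := by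
      rw [List.filter_eq_nil_iff]
      intro t ht
      have := List.flatten_eq_nil_iff.mp hr (children t) (List.mem_map_of_mem ht)
      simp [this]
    have hlb := level_bits gs h
    rw [hiR] at hlb
    rw [hiR] at hCC
    simp only [List.length_nil] at hCC
    have hL0 : numLeavesList (gs.flatten.map children).flatten = 0 := by
      rw [hr]; rfl
    have hN0 : numNodesList (gs.flatten.map children).flatten = 0 := by
      rw [hr]; rfl
    simp only [List.length_nil] at hlb
    omega
  · have h2 := td_main (gs.flatten.map children) hr
    have hfa : (gs.filter (fun g => !g.isEmpty)) ≠ [] := filter_nonempty_ne_nil gs h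
    have hfb : ((bfsGroups (gs.flatten.map children)).filter (fun g => !g.isEmpty)) ≠ [] := by
      rw [bfsGroups, dif_neg (by simpa using hr), List.filter_append]
      intro hh
      exact (filter_nonempty_ne_nil _ hr) (List.append_eq_nil_iff.mp hh).1
    rw [List.map_append,
      intercalate_append_ne _ _ _ (by simpa using hfa) (by simpa using hfb)]
    have hlb := level_bits gs h
    have hcc := filter_children_count gs.flatten
    simp only [List.flatMap_append, List.length_append, tdBits, List.flatMap_cons,
      List.flatMap_nil, List.length_cons, List.length_nil, List.length_append] at h2 hlb ⊢
    omega
termination_by numNodesList gs.flatten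
decreasing_by
  have h1 := numNodesList_children_flatten gs.flatten
  have h2 : gs.flatten.length ≠ 0 := fun hh => h (List.length_eq_zero_iff.mp hh)
  omega

end PTree

open PTree in
/-- **Pointwise TreeExplorer length bound.** For every rooted plane tree `T`
with `n ≥ 2` nodes and `l` leaves, `TE(T)` has length at most `2n - 2` bits,
and its length is strictly less than `2n - 2` whenever `2l ≠ n`. -/
theorem treeExplorer_length_bound (T : PTree) (hn : 2 ≤ numNodes T) :
    (TE T).length ≤ 2 * numNodes T - 2 ∧
    (2 * numLeaves T ≠ numNodes T → (TE T).length < 2 * numNodes T - 2) := by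
  by_cases hlt : 2 * numLeaves T < numNodes T
  · rw [TE, if_pos hlt]
    have := pc_len T
    simp only [List.length_cons]
    omega
  · rw [TE, if_neg hlt]
    push_neg at hlt
    obtain ⟨cs⟩ := T
    have hcs : cs ≠ [] := by
      intro hh; subst hh
      simp [numNodes, numNodesList] at hn
    have hflat : List.flatten [children (node cs)] ≠ [] := by
      simpa using hcs
    have h2 := td_main [children (node cs)] hflat
    have hfl : List.flatten [children (node cs)] = cs := by simp
    rw [hfl] at h2
    have hfil : ([children (node cs)].filter (fun g => !g.isEmpty)).length = 1 := by
      simp [List.filter_cons, hcs, List.isEmpty_iff]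
    rw [hfil] at h2
    have hTD : (TD (node cs)).length
        = ((List.intercalate [TDSym.tunnel]
            (((bfsGroups [children (node cs)]).filter (fun g => !g.isEmpty)).map
              groupSyms)).flatMap tdBits).length := by
      rw [TD, TTD]
      congr 2
      rw [dn1]
    have hNode : numNodes (node cs) = 1 + numNodesList cs := rfl
    have hLeaf : numLeaves (node cs) = numLeavesList cs := by
      cases cs with
      | nil => exact absurd rfl hcs
      | cons c cs' => rfl
    simp only [List.length_cons, hTD]
    rw [hNode, hLeaf]
    rw [hNode] at hn
    rw [hNode, hLeaf] at hlt
    omega
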